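/- For every access structure Γ on a finite set of participants with maximal degree d = d(Γ), there exists an on-line secret sharing scheme realizing Γ with complexity at most d; consequently o(Γ) ≤ d(Γ). -/

import Mathlib

open MeasureTheory Finset
open scoped ENNReal

namespace OnlineSecretSharing

noncomputable section

/-- Shannon entropy of a finitely-valued random variable `X` on the probability
space `(Ω, μ)`. -/
def H {Ω : Type*} [MeasurableSpace Ω] (μ : Measure Ω) {S : Type*} [Fintype S]
    (X : Ω → S) : ℝ :=
  ∑ s : S, Real.negMulLog (μ (X ⁻¹' {s})).toReal

/-- `Y` is almost surely a function of `X`. -/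
def DeterminedBy {Ω : Type*} [MeasurableSpace Ω] (μ : Measure Ω) {S T : Type*}
    (Y : Ω → T) (X : Ω → S) : Prop :=
  ∃ f : S → T, ∀ᵐ ω ∂μ, Y ω = f (X ω)

/-- The (finitely-valued) random variables `X` and `Y` are statistically
independent. -/
def IndepRV {Ω : Type*} [MeasurableSpace Ω] (μ : Measure Ω) {S T : Type*}
    (X : Ω → S) (Y : Ω → T) : Prop :=
  ∀ (s : S) (t : T), μ (X ⁻¹' {s} ∩ Y ⁻¹' {t}) = μ (X ⁻¹' {s}) * μ (Y ⁻¹' {t})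

/-- The joint random variable `(ξ_p)_{p ∈ A}`. -/
def joint {Ω P : Type*} {S : P → Type*} (ξ : (p : P) → Ω → S p) (A : Finset P) :
    Ω → ((p : A) → S (p : P)) :=
  fun ω p => ξ (p : P) ω

/-- An access structure: a nonempty Sperner family of nonempty subsets of the set
`P` of participants; the members of `edges` are the minimal qualified subsets. -/
structure AccessStructure (P : Type*) where
  (edges : Finset (Finset P))
  (nonempty : edges.Nonempty)
  (mem_nonempty : ∀ E ∈ edges, E.Nonempty)
  (sperner : ∀ E ∈ edges, ∀ F ∈ edges, E ⊆ F → E = F)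

/-- A set of participants is qualified if it contains a minimal qualified set. -/
def AccessStructure.Qualified {P : Type*} (Γ : AccessStructure P) (A : Finset P) : Prop :=
  ∃ E ∈ Γ.edges, E ⊆ A

/-- The degree of a participant: the number of hyperedges containing it. -/
def AccessStructure.degree {P : Type*} [DecidableEq P] (Γ : AccessStructure P)
    (p : P) : ℕ :=
  (Γ.edges.filter fun E => p ∈ E).card

/-- The maximal degree of an access structure. -/
def AccessStructure.maxDegree {P : Type*} [Fintype P] [DecidableEq P]
    (Γ : AccessStructure P) : ℕ :=
  Finset.univ.sup Γ.degree

/-- A (candidate) secret sharing scheme: finite-range random variables on a common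
probability space, one secret and one share for each participant. -/
structure Scheme (P : Type) where
  (Ω : Type)
  [ms : MeasurableSpace Ω]
  (μ : Measure Ω)
  (isProb : IsProbabilityMeasure μ)
  (Sec : Type)
  [secFin : Fintype Sec]
  (sec : Ω → Sec)
  (Sh : P → Type)
  [shFin : ∀ p, Fintype (Sh p)]
  (sh : (p : P) → Ω → Sh p)

attribute [instance] Scheme.ms Scheme.secFin Scheme.shFin

/-- A perfect secret sharing scheme realizing `Γ`: the secret has positive entropy,
qualified sets determine the secret, and the shares of unqualified sets are
independent of the secret. -/
def Scheme.Realizes {P : Type} [Fintype P] [DecidableEq P] (𝒮 : Scheme P)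
    (Γ : AccessStructure P) : Prop :=
  0 < H 𝒮.μ 𝒮.sec ∧
  (∀ A : Finset P, Γ.Qualified A → DeterminedBy 𝒮.μ 𝒮.sec (joint 𝒮.sh A)) ∧
  (∀ A : Finset P, ¬ Γ.Qualified A → IndepRV 𝒮.μ (joint 𝒮.sh A) 𝒮.sec)

/-- Complexity of a scheme: (size of the largest share) / (size of the secret). -/
def Scheme.complexity {P : Type} [Fintype P] (𝒮 : Scheme P) : ℝ≥0∞ :=
  (⨆ p : P, ENNReal.ofReal (H 𝒮.μ (𝒮.sh p))) / ENNReal.ofReal (H 𝒮.μ 𝒮.sec)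

/-- The (off-line) complexity `σ(Γ)` of an access structure. -/
def sigmaC {P : Type} [Fintype P] [DecidableEq P] (Γ : AccessStructure P) : ℝ≥0∞ :=
  ⨅ (𝒮 : Scheme P) (_ : 𝒮.Realizes Γ), 𝒮.complexity

/-- An on-line secret sharing scheme: a secret, a family `(ξ_α)_{α ∈ Idx}` of
finite-range random variables, and a dealer strategy `D` assigning an index to
every finite history; a history is a list whose `j`-th entry is the set of
(position-encoded) minimal qualified sets revealed when the `j`-th participant
arrives. -/
structure OnlineScheme (P : Type) where
  (Ω : Type)
  [ms : MeasurableSpace Ω]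
  (μ : Measure Ω)
  (isProb : IsProbabilityMeasure μ)
  (Sec : Type)
  [secFin : Fintype Sec]
  (sec : Ω → Sec)
  (Idx : Type)
  (ShT : Idx → Type)
  [shFin : ∀ α, Fintype (ShT α)]
  (ξ : (α : Idx) → Ω → ShT α)
  (D : List (Finset (Finset ℕ)) → Idx)

attribute [instance] OnlineScheme.ms OnlineScheme.secFin OnlineScheme.shFin

/-- The set of hyperedges (encoded via positions in the arrival order `π`) revealed
when the `j`-th participant arrives: those minimal qualified sets containing the
`j`-th participant all whose members arrived by time `j`. -/
def hist {P : Type} [Fintype P] [DecidableEq P] (Γ : AccessStructure P) {n : ℕ}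
    (π : Fin n ≃ P) (j : Fin n) : Finset (Finset ℕ) :=
  (Γ.edges.filter fun E => π j ∈ E ∧ ∀ p ∈ E, ∃ i : Fin n, i ≤ j ∧ π i = p).image
    fun E => E.image fun p => ((π.symm p : Fin n) : ℕ)

/-- The history seen by the dealer when the `j`-th participant arrives. -/
def histList {P : Type} [Fintype P] [DecidableEq P] (Γ : AccessStructure P) {n : ℕ}
    (π : Fin n ≃ P) (j : Fin n) : List (Finset (Finset ℕ)) :=
  ((List.finRange n).take (j.1 + 1)).map (hist Γ π)

/-- The assignment of shares produced by an on-line scheme for the arrival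
order `π`, as an (off-line) scheme. -/
def OnlineScheme.toScheme {P : Type} [Fintype P] [DecidableEq P] (𝒪 : OnlineScheme P)
    (Γ : AccessStructure P) (π : Fin (Fintype.card P) ≃ P) : Scheme P where
  Ω := 𝒪.Ω
  ms := 𝒪.ms
  μ := 𝒪.μ
  isProb := 𝒪.isProb
  Sec := 𝒪.Sec
  secFin := 𝒪.secFin
  sec := 𝒪.sec
  Sh := fun p => 𝒪.ShT (𝒪.D (histList Γ π (π.symm p)))
  shFin := fun _ => 𝒪.shFin _
  sh := fun _ => 𝒪.ξ _

/-- An on-line scheme realizes `Γ` if for every arrival order the induced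
assignment of shares is a perfect secret sharing scheme realizing `Γ`. -/
def OnlineScheme.Realizes {P : Type} [Fintype P] [DecidableEq P] (𝒪 : OnlineScheme P)
    (Γ : AccessStructure P) : Prop :=
  ∀ π : Fin (Fintype.card P) ≃ P, (𝒪.toScheme Γ π).Realizes Γ

/-- Complexity of an on-line scheme. -/
def OnlineScheme.complexity {P : Type} (𝒪 : OnlineScheme P) : ℝ≥0∞ :=
  (⨆ α : 𝒪.Idx, ENNReal.ofReal (H 𝒪.μ (𝒪.ξ α))) / ENNReal.ofReal (H 𝒪.μ 𝒪.sec)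

/-- The on-line complexity `o(Γ)` of an access structure. -/
def oC {P : Type} [Fintype P] [DecidableEq P] (Γ : AccessStructure P) : ℝ≥0∞ :=
  ⨅ (𝒪 : OnlineScheme P) (_ : 𝒪.Realizes Γ), 𝒪.complexity

/-- An entropy function for `Γ`: rules (a)–(e) of the entropy method. -/
def IsEntropyFn {P : Type} [DecidableEq P] (Γ : AccessStructure P)
    (f : Finset P → ℝ) : Prop :=
  f ∅ = 0 ∧
  (∀ A B : Finset P, A ⊆ B → f A ≤ f B) ∧
  (∀ A B : Finset P, f (A ∩ B) + f (A ∪ B) ≤ f A + f B) ∧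
  (∀ A B : Finset P, A ⊆ B → ¬ Γ.Qualified A → Γ.Qualified B → f A + 1 ≤ f B) ∧
  (∀ A B : Finset P, Γ.Qualified A → Γ.Qualified B → ¬ Γ.Qualified (A ∩ B) →
    f (A ∩ B) + f (A ∪ B) + 1 ≤ f A + f B)

/-- The access structure associated with a graph: the minimal qualified sets are
exactly the edges. -/
def graphAS {P : Type} [Fintype P] [DecidableEq P] (G : SimpleGraph P)
    (hne : ∃ a b, G.Adj a b) : AccessStructure P :=
  letI : DecidableRel G.Adj := Classical.decRel _
  { edges := ((Finset.univ : Finset (P × P)).filter fun q => G.Adj q.1 q.2).image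
      fun q => {q.1, q.2}
    nonempty := by
      obtain ⟨a, b, hab⟩ := hne
      exact ⟨{a, b}, Finset.mem_image.2
        ⟨(a, b), Finset.mem_filter.2 ⟨Finset.mem_univ _, hab⟩, rfl⟩⟩
    mem_nonempty := by
      intro E hE
      rcases Finset.mem_image.1 hE with ⟨q, _, rfl⟩
      exact ⟨q.1, by simp⟩
    sperner := by
      intro E hE F hF hEF
      rcases Finset.mem_image.1 hE with ⟨q, hq, rfl⟩
      rcases Finset.mem_image.1 hF with ⟨r, hr, rfl⟩
      have hq' : G.Adj q.1 q.2 := (Finset.mem_filter.1 hq).2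
      have hr' : G.Adj r.1 r.2 := (Finset.mem_filter.1 hr).2
      refine Finset.eq_of_subset_of_card_le hEF ?_
      rw [Finset.card_pair hr'.ne, Finset.card_pair hq'.ne] }

/-- The path `P_{m+2}` on the `m + 2` vertices `0, 1, …, m+1` (in this order),
as an access structure: the minimal qualified sets are the pairs `{i, i+1}`. -/
def pathAS (m : ℕ) : AccessStructure (Fin (m + 2)) where
  edges := (Finset.univ : Finset (Fin (m + 1))).image fun i => {i.castSucc, i.succ}
  nonempty := ⟨_, Finset.mem_image.2 ⟨0, Finset.mem_univ _, rfl⟩⟩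
  mem_nonempty := by
    intro E hE
    rcases Finset.mem_image.1 hE with ⟨i, _, rfl⟩
    exact ⟨_, Finset.mem_insert_self _ _⟩
  sperner := by
    intro E hE F hF hEF
    rcases Finset.mem_image.1 hE with ⟨i, _, rfl⟩
    rcases Finset.mem_image.1 hF with ⟨j, _, rfl⟩
    have h1 := hEF (Finset.mem_insert_self _ _)
    have h2 := hEF (Finset.mem_insert_of_mem (Finset.mem_singleton_self _))
    rw [Finset.mem_insert, Finset.mem_singleton] at h1 h2
    rw [Fin.ext_iff, Fin.ext_iff] at h1 h2
    simp only [Fin.coe_castSucc, Fin.val_succ] at h1 h2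
    have : i = j := Fin.ext (by omega)
    subst this; rfl

/-- The cycle `C_{m+3}` on the `m + 3` vertices `0, 1, …, m+2` (in this cyclic
order), as an access structure: the minimal qualified sets are the pairs
`{i, i+1}` together with `{0, m+2}`. -/
def cycleAS (m : ℕ) : AccessStructure (Fin (m + 3)) where
  edges := ((Finset.univ : Finset (Fin (m + 2))).image fun i => {i.castSucc, i.succ}) ∪
    {({0, Fin.last (m + 2)} : Finset (Fin (m + 3)))}
  nonempty := ⟨_, Finset.mem_union_right _ (Finset.mem_singleton_self _)⟩
  mem_nonempty := by
    intro E hE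
    rcases Finset.mem_union.1 hE with hE | hE
    · rcases Finset.mem_image.1 hE with ⟨i, _, rfl⟩
      exact ⟨_, Finset.mem_insert_self _ _⟩
    · rw [Finset.mem_singleton.1 hE]
      exact ⟨_, Finset.mem_insert_self _ _⟩
  sperner := by
    intro E hE F hF hEF
    rcases Finset.mem_union.1 hE with hE | hE <;>
      rcases Finset.mem_union.1 hF with hF | hF
    · rcases Finset.mem_image.1 hE with ⟨i, _, rfl⟩
      rcases Finset.mem_image.1 hF with ⟨j, _, rfl⟩
      have h1 := hEF (Finset.mem_insert_self _ _)
      have h2 := hEF (Finset.mem_insert_of_mem (Finset.mem_singleton_self _))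
      rw [Finset.mem_insert, Finset.mem_singleton] at h1 h2
      rw [Fin.ext_iff, Fin.ext_iff] at h1 h2
      simp only [Fin.coe_castSucc, Fin.val_succ] at h1 h2
      have : i = j := Fin.ext (by omega)
      subst this; rfl
    · exfalso
      rcases Finset.mem_image.1 hE with ⟨i, _, rfl⟩
      rw [Finset.mem_singleton.1 hF] at hEF
      have h1 := hEF (Finset.mem_insert_self _ _)
      have h2 := hEF (Finset.mem_insert_of_mem (Finset.mem_singleton_self _))
      rw [Finset.mem_insert, Finset.mem_singleton] at h1 h2
      rw [Fin.ext_iff, Fin.ext_iff] at h1 h2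
      simp only [Fin.coe_castSucc, Fin.val_succ, Fin.val_zero, Fin.val_last] at h1 h2
      have := i.2
      omega
    · exfalso
      rcases Finset.mem_image.1 hF with ⟨j, _, rfl⟩
      rw [Finset.mem_singleton.1 hE] at hEF
      have h1 := hEF (Finset.mem_insert_self _ _)
      have h2 := hEF (Finset.mem_insert_of_mem (Finset.mem_singleton_self _))
      rw [Finset.mem_insert, Finset.mem_singleton] at h1 h2
      rw [Fin.ext_iff, Fin.ext_iff] at h1 h2
      simp only [Fin.coe_castSucc, Fin.val_succ, Fin.val_zero, Fin.val_last] at h1 h2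
      have := j.2
      omega
    · rw [Finset.mem_singleton.1 hE, Finset.mem_singleton.1 hF]

/-- The vertex set of the graph `G(d,m)`: a center (`none`), `d` star leaves
(`some (inl i)`) and `m` isolated vertices (`some (inr j)`). -/
abbrev StarVertex (d m : ℕ) : Type := Option (Fin d ⊕ Fin m)

/-- The center of the star in the graph `G(d,m)`. -/
def starCenter (d m : ℕ) : StarVertex d m := none

/-- The graph `G(d,m)`: a star with `d` edges together with `m` isolated
vertices, as an access structure. -/
def starAS (d m : ℕ) (hd : 1 ≤ d) : AccessStructure (StarVertex d m) where
  edges := (Finset.univ : Finset (Fin d)).image fun i =>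
    {starCenter d m, some (Sum.inl i)}
  nonempty := ⟨_, Finset.mem_image.2 ⟨⟨0, by omega⟩, Finset.mem_univ _, rfl⟩⟩
  mem_nonempty := by
    intro E hE
    rcases Finset.mem_image.1 hE with ⟨i, _, rfl⟩
    exact ⟨_, Finset.mem_insert_self _ _⟩
  sperner := by
    intro E hE F hF hEF
    rcases Finset.mem_image.1 hE with ⟨i, _, rfl⟩
    rcases Finset.mem_image.1 hF with ⟨j, _, rfl⟩
    have h2 := hEF (Finset.mem_insert_of_mem (Finset.mem_singleton_self _))
    rw [Finset.mem_insert, Finset.mem_singleton] at h2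
    rcases h2 with h | h
    · exact absurd h (by simp [starCenter])
    · simp only [Option.some.injEq, Sum.inl.injEq] at h
      subst h; rfl

/-- The substructure of `Γ` induced by `S` (assuming it contains at least one
hyperedge), as an access structure on the subtype `S`. -/
def inducedAS {P : Type} [DecidableEq P] (Γ : AccessStructure P) (S : Finset P)
    (h : ∃ E ∈ Γ.edges, E ⊆ S) : AccessStructure {x : P // x ∈ S} where
  edges := (Γ.edges.filter fun E => E ⊆ S).image fun E => E.subtype fun x => x ∈ S
  nonempty := by
    obtain ⟨E, hE, hES⟩ := h
    exact ⟨_, Finset.mem_image.2 ⟨E, Finset.mem_filter.2 ⟨hE, hES⟩, rfl⟩⟩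
  mem_nonempty := by
    intro E' hE'
    rcases Finset.mem_image.1 hE' with ⟨E, hE, rfl⟩
    have hE1 := (Finset.mem_filter.1 hE).1
    have hES := (Finset.mem_filter.1 hE).2
    obtain ⟨a, ha⟩ := Γ.mem_nonempty E hE1
    exact ⟨⟨a, hES ha⟩, Finset.mem_subtype.2 ha⟩
  sperner := by
    intro E' hE' F' hF' hEF
    rcases Finset.mem_image.1 hE' with ⟨E, hE, rfl⟩
    rcases Finset.mem_image.1 hF' with ⟨F, hF, rfl⟩
    have hE1 := (Finset.mem_filter.1 hE).1
    have hF1 := (Finset.mem_filter.1 hF).1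
    have hES := (Finset.mem_filter.1 hE).2
    have hsub : E ⊆ F := by
      intro a ha
      exact Finset.mem_subtype.1 (hEF (Finset.mem_subtype.2 ha : (⟨a, hES ha⟩ :
        {x : P // x ∈ S}) ∈ E.subtype fun x => x ∈ S))
    rw [Γ.sperner E hE1 F hF1 hsub]

/-! ### Auxiliary development for the first-fit on-line scheme -/

set_option linter.unusedSectionVars false
set_option linter.unusedVariables false

section FirstFitAux

variable {P : Type} [Fintype P] [DecidableEq P]

/-- Position of a participant under the arrival order `π`. -/
def ppos {n : ℕ} (π : Fin n ≃ P) (p : P) : ℕ := (π.symm p : ℕ)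

lemma ppos_injective {n : ℕ} (π : Fin n ≃ P) : Function.Injective (ppos π) :=
  fun p q h => π.symm.injective (Fin.val_injective h)

/-- Position-encoding of a set of participants. -/
def posSet {n : ℕ} (π : Fin n ≃ P) (E : Finset P) : Finset ℕ := E.image (ppos π)

lemma posSet_injective {n : ℕ} (π : Fin n ≃ P) : Function.Injective (posSet π) :=
  Finset.image_injective (ppos_injective π)

/-- Completion time of a set of participants: the largest arrival position. -/
def etime {n : ℕ} (π : Fin n ≃ P) (E : Finset P) : ℕ := E.sup (ppos π)

lemma le_etime {n : ℕ} (π : Fin n ≃ P) {E : Finset P} {p : P} (hp : p ∈ E) :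
    ppos π p ≤ etime π E := Finset.le_sup hp

lemma exists_etime {n : ℕ} (π : Fin n ≃ P) {E : Finset P} (hE : E.Nonempty) :
    ∃ p ∈ E, ppos π p = etime π E := by
  obtain ⟨p, hp, h⟩ := Finset.exists_mem_eq_sup E hE (ppos π)
  exact ⟨p, hp, h.symm⟩

/-- An injective encoding of finite sets of naturals, used for tie-breaking. -/
def encF : Finset ℕ → ℕ := Encodable.encode

lemma encF_injective : Function.Injective encF := Encodable.encode_injective

/-- The completion order on edges: lexicographic in (completion time, encoding). -/
def ordLT {n : ℕ} (π : Fin n ≃ P) (E E' : Finset P) : Prop :=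
  etime π E < etime π E' ∨
    (etime π E = etime π E' ∧ encF (posSet π E) < encF (posSet π E'))

instance {n : ℕ} (π : Fin n ≃ P) (E E' : Finset P) : Decidable (ordLT π E E') := by
  unfold ordLT; infer_instance

lemma ordLT_irrefl {n : ℕ} (π : Fin n ≃ P) (E : Finset P) : ¬ ordLT π E E := by
  simp [ordLT]

lemma ordLT_trans {n : ℕ} (π : Fin n ≃ P) {E E' E'' : Finset P}
    (h1 : ordLT π E E') (h2 : ordLT π E' E'') : ordLT π E E'' := by
  unfold ordLT at *; omega

lemma ordLT_trichotomy {n : ℕ} (π : Fin n ≃ P) {E E' : Finset P} (h : E ≠ E') :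
    ordLT π E E' ∨ ordLT π E' E := by
  have henc : encF (posSet π E) ≠ encF (posSet π E') :=
    fun hc => h (posSet_injective π (encF_injective hc))
  unfold ordLT; omega

/-- The slot assigned to position `i` for the edge `E`: the number of edges
containing position `i` that are completed strictly before `E`. -/
def gslot (Γ : AccessStructure P) {n : ℕ} (π : Fin n ≃ P) (i : ℕ) (E : Finset P) : ℕ :=
  (Γ.edges.filter fun E' => i ∈ posSet π E' ∧ ordLT π E' E).card

lemma mem_posSet_iff {n : ℕ} (π : Fin n ≃ P) {i : ℕ} {E : Finset P} {p : P}
    (hp : ppos π p = i) : i ∈ posSet π E ↔ p ∈ E := by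
  constructor
  · rintro hi
    rcases Finset.mem_image.1 hi with ⟨q, hq, hq'⟩
    have hqp : q = p := ppos_injective π (by rw [hq', hp])
    rwa [← hqp]
  · intro hpE
    exact Finset.mem_image.2 ⟨p, hpE, hp⟩

lemma gslot_lt (Γ : AccessStructure P) {n : ℕ} (π : Fin n ≃ P) {i : ℕ} {E : Finset P}
    (hE : E ∈ Γ.edges) (hi : i ∈ posSet π E) : gslot Γ π i E < Γ.maxDegree := by
  rcases Finset.mem_image.1 hi with ⟨p, hp, hpi⟩
  have hdeg : (Γ.edges.filter fun E' => i ∈ posSet π E').card = Γ.degree p := by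
    unfold AccessStructure.degree
    congr 1
    apply Finset.filter_congr
    intro E' _
    simp only [mem_posSet_iff π hpi, eq_iff_iff]
  have hlt : gslot Γ π i E < (Γ.edges.filter fun E' => i ∈ posSet π E').card := by
    apply Finset.card_lt_card
    constructor
    · intro x hx
      rcases Finset.mem_filter.1 hx with ⟨h1, h2, _⟩
      exact Finset.mem_filter.2 ⟨h1, h2⟩
    · intro hsub
      have hEmem : E ∈ Γ.edges.filter fun E' => i ∈ posSet π E' :=
        Finset.mem_filter.2 ⟨hE, hi⟩
      have := hsub hEmem
      rcases Finset.mem_filter.1 this with ⟨_, _, h3⟩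
      exact ordLT_irrefl π E h3
  calc gslot Γ π i E < Γ.degree p := hdeg ▸ hlt
    _ ≤ Γ.maxDegree := Finset.le_sup (Finset.mem_univ p)

lemma gslot_strictMono (Γ : AccessStructure P) {n : ℕ} (π : Fin n ≃ P) {i : ℕ}
    {E E' : Finset P} (hE : E ∈ Γ.edges) (hi : i ∈ posSet π E) (h : ordLT π E E') :
    gslot Γ π i E < gslot Γ π i E' := by
  apply Finset.card_lt_card
  constructor
  · intro x hx
    rcases Finset.mem_filter.1 hx with ⟨h1, h2, h3⟩
    exact Finset.mem_filter.2 ⟨h1, h2, ordLT_trans π h3 h⟩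
  · intro hsub
    have hEmem : E ∈ Γ.edges.filter fun E'' => i ∈ posSet π E'' ∧ ordLT π E'' E' :=
      Finset.mem_filter.2 ⟨hE, hi, h⟩
    have := hsub hEmem
    rcases Finset.mem_filter.1 this with ⟨_, _, h3⟩
    exact ordLT_irrefl π E h3

lemma gslot_injOn (Γ : AccessStructure P) {n : ℕ} (π : Fin n ≃ P) {i : ℕ}
    {E E' : Finset P} (hE : E ∈ Γ.edges) (hE' : E' ∈ Γ.edges)
    (hi : i ∈ posSet π E) (hi' : i ∈ posSet π E')
    (h : gslot Γ π i E = gslot Γ π i E') : E = E' := by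
  by_contra hne
  rcases ordLT_trichotomy π hne with hlt | hlt
  · exact absurd h (Nat.ne_of_lt (gslot_strictMono Γ π hE hi hlt))
  · exact absurd h.symm (Nat.ne_of_lt (gslot_strictMono Γ π hE' hi' hlt))

lemma hist_eq (Γ : AccessStructure P) {n : ℕ} (π : Fin n ≃ P) (j : Fin n) :
    hist Γ π j = (Γ.edges.filter fun E => etime π E = j.1).image (posSet π) := by
  unfold hist
  congr 1
  apply Finset.filter_congr
  intro E hE
  constructor
  · rintro ⟨h1, h2⟩
    apply le_antisymm
    · apply Finset.sup_le
      intro p hp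
      rcases h2 p hp with ⟨i, hij, hip⟩
      have : π.symm p = i := by rw [← hip]; exact π.symm_apply_apply i
      unfold ppos
      rw [this]
      exact hij
    · have : ppos π (π j) = j.1 := by unfold ppos; rw [π.symm_apply_apply]
      rw [← this]
      exact le_etime π h1
  · intro h
    obtain ⟨p, hp, hpt⟩ := exists_etime π (Γ.mem_nonempty E hE)
    have hpj : π.symm p = j := Fin.ext (by rw [← h, ← hpt]; rfl)
    constructor
    · have : π j = p := by rw [← hpj, π.apply_symm_apply]
      rwa [this]
    · intro q hq
      refine ⟨π.symm q, ?_, π.apply_symm_apply q⟩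
      have := le_etime π hq
      rw [h] at this
      exact this

lemma mem_hist_iff (Γ : AccessStructure P) {n : ℕ} (π : Fin n ≃ P) (j : Fin n)
    {F : Finset ℕ} :
    F ∈ hist Γ π j ↔ ∃ E ∈ Γ.edges, etime π E = j.1 ∧ posSet π E = F := by
  rw [hist_eq]
  simp only [Finset.mem_image, Finset.mem_filter]
  constructor
  · rintro ⟨E, ⟨h1, h2⟩, h3⟩; exact ⟨E, h1, h2, h3⟩
  · rintro ⟨E, h1, h2, h3⟩; exact ⟨E, ⟨h1, h2⟩, h3⟩

lemma histList_length (Γ : AccessStructure P) {n : ℕ} (π : Fin n ≃ P) (J : Fin n) :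
    (histList Γ π J).length = J.1 + 1 := by
  unfold histList
  rw [List.length_map, List.length_take, List.length_finRange]
  omega

lemma histList_getD (Γ : AccessStructure P) {n : ℕ} (π : Fin n ≃ P) (J : Fin n)
    (t : Fin n) (ht : t.1 ≤ J.1) :
    (histList Γ π J).getD t.1 ∅ = hist Γ π t := by
  have hlen : t.1 < (histList Γ π J).length := by rw [histList_length]; omega
  rw [List.getD_eq_getElem _ _ hlen]
  simp only [histList, List.getElem_map, List.getElem_take, List.getElem_finRange]
  exact congrArg (hist Γ π) (Fin.ext rfl)

/-- The dealer's slot computation from a history. -/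
def slotA (α : List (Finset (Finset ℕ))) (i : ℕ) (F : Finset ℕ) : ℕ :=
  ∑ t' ∈ Finset.range α.length,
    ((α.getD t' ∅).filter fun F' => i ∈ F' ∧ (t' + 1 < α.length ∨ encF F' < encF F)).card

/-- Semantics of the dealer's slot computation on valid histories. -/
lemma slotA_histList (Γ : AccessStructure P) {n : ℕ} (π : Fin n ≃ P) (J : Fin n)
    {E : Finset P} (hE : E ∈ Γ.edges) (hJ : etime π E = J.1) (i : ℕ) :
    slotA (histList Γ π J) i (posSet π E) = gslot Γ π i E := by
  unfold slotA gslot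
  rw [histList_length]
  have hterm : ∀ t' ∈ Finset.range (J.1 + 1),
      (((histList Γ π J).getD t' ∅).filter fun F' =>
        i ∈ F' ∧ (t' + 1 < J.1 + 1 ∨ encF F' < encF (posSet π E))).card
      = ((Γ.edges.filter fun E' => i ∈ posSet π E' ∧ ordLT π E' E).filter
          fun E' => etime π E' = t').card := by
    intro t' ht'
    rw [Finset.mem_range] at ht'
    have ht'n : t' < n := by omega
    rw [histList_getD Γ π J ⟨t', ht'n⟩ (by simpa using Nat.lt_succ_iff.1 ht'),
      hist_eq, Finset.filter_image, Finset.card_image_of_injective _ (posSet_injective π),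
      Finset.filter_filter, Finset.filter_filter]
    congr 1
    apply Finset.filter_congr
    intro E' hE'
    simp only [eq_iff_iff]
    constructor
    · rintro ⟨ht, hi', hcase⟩
      refine ⟨⟨hi', ?_⟩, ht⟩
      rcases hcase with hlt | henc
      · exact Or.inl (by omega)
      · rcases Nat.lt_or_ge t' J.1 with h | h
        · exact Or.inl (by omega)
        · exact Or.inr ⟨by omega, henc⟩
    · rintro ⟨⟨hi', hord⟩, ht⟩
      refine ⟨ht, hi', ?_⟩
      rcases hord with hlt | ⟨heq, henc⟩
      · exact Or.inl (by omega)
      · exact Or.inr henc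
  rw [Finset.sum_congr rfl hterm]
  symm
  apply Finset.card_eq_sum_card_fiberwise
  intro E' hE'
  rcases Finset.mem_filter.1 hE' with ⟨_, _, hord⟩
  rw [Finset.mem_coe, Finset.mem_range]
  rcases hord with h | ⟨h, _⟩ <;> omega

/-- The dealer's share function: coordinate `k` of the share handed to the
participant arriving with history `α`. -/
def shareFun (α : List (Finset (Finset ℕ))) (s : ZMod 2) (rr : ℕ → ℕ → ZMod 2)
    (k : ℕ) : ZMod 2 :=
  let j := α.length - 1
  let C := (α.getD j ∅).filter fun F => slotA α j F = k
  if C = ∅ then rr j k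
  else s + ∑ F ∈ C, ∑ i ∈ F.erase j, rr i (slotA α i F)

lemma etime_mem_posSet {n : ℕ} (π : Fin n ≃ P) {E : Finset P} (hne : E.Nonempty) :
    etime π E ∈ posSet π E := by
  obtain ⟨p, hp, hpt⟩ := exists_etime π hne
  exact Finset.mem_image.2 ⟨p, hp, hpt⟩

lemma shareFun_correction (Γ : AccessStructure P) {n : ℕ} (π : Fin n ≃ P) (J : Fin n)
    {E : Finset P} (hE : E ∈ Γ.edges) (hJ : etime π E = J.1) (s : ZMod 2)
    (rr : ℕ → ℕ → ZMod 2) :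
    shareFun (histList Γ π J) s rr (gslot Γ π J.1 E)
      = s + ∑ i ∈ (posSet π E).erase J.1, rr i (gslot Γ π i E) := by
  have hlen : (histList Γ π J).length - 1 = J.1 := by rw [histList_length]; omega
  have hgetD : (histList Γ π J).getD ((histList Γ π J).length - 1) ∅ = hist Γ π J := by
    rw [hlen]; exact histList_getD Γ π J J le_rfl
  have hJmem : J.1 ∈ posSet π E := hJ ▸ etime_mem_posSet π (Γ.mem_nonempty E hE)
  have hC : ((histList Γ π J).getD ((histList Γ π J).length - 1) ∅).filter
      (fun F => slotA (histList Γ π J) ((histList Γ π J).length - 1) F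
        = gslot Γ π J.1 E) = {posSet π E} := by
    rw [hgetD, hlen]
    apply Finset.eq_singleton_iff_unique_mem.2
    constructor
    · exact Finset.mem_filter.2 ⟨(mem_hist_iff Γ π J).2 ⟨E, hE, hJ, rfl⟩,
        slotA_histList Γ π J hE hJ J.1⟩
    · intro F hF
      rcases Finset.mem_filter.1 hF with ⟨h1, h2⟩
      rcases (mem_hist_iff Γ π J).1 h1 with ⟨E₀, hE₀, ht₀, hpe⟩
      rw [← hpe, slotA_histList Γ π J hE₀ ht₀ J.1] at h2
      rw [← hpe]
      exact congrArg (posSet π) (gslot_injOn Γ π hE₀ hE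
        (ht₀ ▸ etime_mem_posSet π (Γ.mem_nonempty E₀ hE₀)) hJmem h2)
  rw [shareFun]
  simp only [hC]
  rw [if_neg (Finset.singleton_ne_empty _), Finset.sum_singleton, hlen]
  congr 1
  apply Finset.sum_congr rfl
  intro i hi
  rw [slotA_histList Γ π J hE hJ i]

lemma shareFun_raw (Γ : AccessStructure P) {n : ℕ} (π : Fin n ≃ P) (J : Fin n)
    (k : ℕ) (hk : ∀ E ∈ Γ.edges, etime π E = J.1 → gslot Γ π J.1 E ≠ k)
    (s : ZMod 2) (rr : ℕ → ℕ → ZMod 2) :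
    shareFun (histList Γ π J) s rr k = rr J.1 k := by
  have hlen : (histList Γ π J).length - 1 = J.1 := by rw [histList_length]; omega
  have hgetD : (histList Γ π J).getD ((histList Γ π J).length - 1) ∅ = hist Γ π J := by
    rw [hlen]; exact histList_getD Γ π J J le_rfl
  have hC : ((histList Γ π J).getD ((histList Γ π J).length - 1) ∅).filter
      (fun F => slotA (histList Γ π J) ((histList Γ π J).length - 1) F = k) = ∅ := by
    rw [hgetD, hlen]
    apply Finset.filter_eq_empty_iff.2
    intro F h1
    rcases (mem_hist_iff Γ π J).1 h1 with ⟨E₀, hE₀, ht₀, hpe⟩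
    rw [← hpe, slotA_histList Γ π J hE₀ ht₀ J.1]
    exact hk E₀ hE₀ ht₀
  rw [shareFun]
  simp only [hC, if_true]
  rw [hlen]

/-! ### The underlying finite probability space -/

/-- Sample space: a secret bit together with `d` random bits for each position. -/
def ffOmega (n d : ℕ) : Type := ZMod 2 × (Fin n → Fin d → ZMod 2)

instance (n d : ℕ) : Fintype (ffOmega n d) :=
  inferInstanceAs (Fintype (ZMod 2 × (Fin n → Fin d → ZMod 2)))

instance (n d : ℕ) : DecidableEq (ffOmega n d) :=
  inferInstanceAs (DecidableEq (ZMod 2 × (Fin n → Fin d → ZMod 2)))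

instance (n d : ℕ) : Nonempty (ffOmega n d) :=
  inferInstanceAs (Nonempty (ZMod 2 × (Fin n → Fin d → ZMod 2)))

instance (n d : ℕ) : MeasurableSpace (ffOmega n d) := ⊤

instance (n d : ℕ) : MeasurableSingletonClass (ffOmega n d) := ⟨fun _ => trivial⟩

/-- The uniform probability measure on the sample space. -/
def μff (n d : ℕ) : Measure (ffOmega n d) :=
  (Fintype.card (ffOmega n d) : ℝ≥0∞)⁻¹ • Measure.count

lemma ffcard_ne_zero (n d : ℕ) : (Fintype.card (ffOmega n d) : ℝ≥0∞) ≠ 0 := by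
  exact_mod_cast Fintype.card_ne_zero

lemma μff_coe (n d : ℕ) (F : Finset (ffOmega n d)) :
    μff n d ↑F = (Fintype.card (ffOmega n d) : ℝ≥0∞)⁻¹ * F.card := by
  rw [μff, Measure.smul_apply, Measure.count_apply_finset, smul_eq_mul]

instance μff_prob (n d : ℕ) : IsProbabilityMeasure (μff n d) := by
  constructor
  rw [← Finset.coe_univ, μff_coe, Finset.card_univ]
  exact ENNReal.inv_mul_cancel (ffcard_ne_zero n d) (ENNReal.natCast_ne_top _)

lemma μff_fiber {n d : ℕ} {S : Type*} [DecidableEq S] (X : ffOmega n d → S) (v : S) :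
    μff n d (X ⁻¹' {v}) = (Fintype.card (ffOmega n d) : ℝ≥0∞)⁻¹
      * (Finset.univ.filter fun ω => X ω = v).card := by
  have hs : X ⁻¹' {v} = ↑(Finset.univ.filter fun ω => X ω = v) := by ext ω; simp
  rw [hs, μff_coe]

lemma μff_fiber_toReal {n d : ℕ} {S : Type*} [DecidableEq S] (X : ffOmega n d → S)
    (v : S) : (μff n d (X ⁻¹' {v})).toReal
      = ((Finset.univ.filter fun ω => X ω = v).card : ℝ)
        / (Fintype.card (ffOmega n d) : ℝ) := by
  rw [μff_fiber, ENNReal.toReal_mul, ENNReal.toReal_inv, ENNReal.toReal_natCast,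
    ENNReal.toReal_natCast, inv_mul_eq_div]

/-! ### Entropy bounds -/

lemma sum_negMulLog_le_log_card {S : Type*} [Fintype S] (p : S → ℝ)
    (h0 : ∀ s, 0 ≤ p s) (h1 : ∑ s, p s = 1) :
    ∑ s, Real.negMulLog (p s) ≤ Real.log (Fintype.card S) := by
  have hcard : 0 < Fintype.card S := by
    rcases Nat.eq_zero_or_pos (Fintype.card S) with h | h
    · exfalso
      have : IsEmpty S := Fintype.card_eq_zero_iff.1 h
      rw [Finset.univ_eq_empty, Finset.sum_empty] at h1
      norm_num at h1
    · exact h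
  set N : ℝ := (Fintype.card S : ℝ) with hNdef
  have hN : 0 < N := by rw [hNdef]; exact_mod_cast hcard
  have key : ∀ s, Real.negMulLog (p s) ≤ 1 / N - p s + p s * Real.log N := by
    intro s
    rcases eq_or_lt_of_le (h0 s) with h | h
    · rw [← h, Real.negMulLog_zero]
      have heq : 1 / N - 0 + 0 * Real.log N = 1 / N := by ring
      rw [heq]
      positivity
    · have h2 : -Real.log (p s) ≤ (N * p s)⁻¹ - 1 + Real.log N := by
        have hh := Real.log_le_sub_one_of_pos (x := (N * p s)⁻¹) (by positivity)
        rw [Real.log_inv, Real.log_mul (ne_of_gt hN) (ne_of_gt h)] at hh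
        linarith
      have h3 : p s * (N * p s)⁻¹ = 1 / N := by
        field_simp
        try ring
      calc Real.negMulLog (p s) = p s * (-Real.log (p s)) := by
            rw [Real.negMulLog]; ring
        _ ≤ p s * ((N * p s)⁻¹ - 1 + Real.log N) :=
            mul_le_mul_of_nonneg_left h2 (le_of_lt h)
        _ = p s * (N * p s)⁻¹ - p s + p s * Real.log N := by ring
        _ = 1 / N - p s + p s * Real.log N := by rw [h3]
  calc ∑ s, Real.negMulLog (p s) ≤ ∑ s, (1 / N - p s + p s * Real.log N) :=
        Finset.sum_le_sum fun s _ => key s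
    _ = (Fintype.card S : ℝ) * (1 / N) - 1 + Real.log N := by
        rw [Finset.sum_add_distrib, Finset.sum_sub_distrib, Finset.sum_const,
          ← Finset.sum_mul, h1, one_mul, Finset.card_univ, nsmul_eq_mul]
    _ = Real.log N := by
        rw [← hNdef]
        field_simp
        ring
  done

lemma sum_fibers_card {n d : ℕ} {S : Type*} [Fintype S] [DecidableEq S]
    (X : ffOmega n d → S) :
    ∑ s : S, ((Finset.univ.filter fun ω => X ω = s).card : ℝ)
      = (Fintype.card (ffOmega n d) : ℝ) := by
  rw [← Nat.cast_sum]
  congr 1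
  rw [← Finset.card_univ (α := ffOmega n d)]
  exact (Finset.card_eq_sum_card_fiberwise fun x _ => Finset.mem_univ (X x)).symm

lemma H_μff_le {n d : ℕ} {S : Type*} [Fintype S] [DecidableEq S]
    (X : ffOmega n d → S) : H (μff n d) X ≤ Real.log (Fintype.card S) := by
  unfold H
  apply sum_negMulLog_le_log_card
  · intro s; exact ENNReal.toReal_nonneg
  · have : ∀ s : S, (μff n d (X ⁻¹' {s})).toReal
        = ((Finset.univ.filter fun ω => X ω = s).card : ℝ)
          / (Fintype.card (ffOmega n d) : ℝ) := fun s => μff_fiber_toReal X s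
    rw [Finset.sum_congr rfl fun s _ => this s, ← Finset.sum_div, sum_fibers_card]
    have hc : (0:ℝ) < (Fintype.card (ffOmega n d) : ℝ) := by
      exact_mod_cast Fintype.card_pos
    field_simp

lemma card_fiber_fst (n d : ℕ) (s : ZMod 2) :
    (Finset.univ.filter fun ω : ffOmega n d => ω.1 = s).card
      = Fintype.card (Fin n → Fin d → ZMod 2) := by
  rw [← Finset.card_univ]
  apply Finset.card_bij' (fun ω _ => ω.2) (fun r _ => ((s, r) : ffOmega n d))
  · intro a ha
    exact Finset.mem_univ _
  · intro r _
    exact Finset.mem_filter.2 ⟨Finset.mem_univ _, rfl⟩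
  · intro a ha
    obtain ⟨_, h⟩ := Finset.mem_filter.1 ha
    exact Prod.ext (h.symm) rfl
  · intro r _
    rfl

lemma ffcard_eq (n d : ℕ) :
    Fintype.card (ffOmega n d) = 2 * Fintype.card (Fin n → Fin d → ZMod 2) := by
  have h : Fintype.card (ffOmega n d)
      = Fintype.card (ZMod 2 × (Fin n → Fin d → ZMod 2)) := rfl
  rw [h, Fintype.card_prod, ZMod.card]

lemma H_fst (n d : ℕ) : H (μff n d) (fun ω : ffOmega n d => ω.1) = Real.log 2 := by
  unfold H
  have hfib : ∀ s : ZMod 2,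
      (μff n d ((fun ω : ffOmega n d => ω.1) ⁻¹' {s})).toReal = 1 / 2 := by
    intro s
    rw [μff_fiber_toReal, card_fiber_fst, ffcard_eq]
    have hR : (0:ℝ) < (Fintype.card (Fin n → Fin d → ZMod 2) : ℝ) := by
      exact_mod_cast Fintype.card_pos
    push_cast
    field_simp
    try ring
  rw [Finset.sum_congr rfl fun s _ => by rw [hfib s]]
  rw [Finset.sum_const, Finset.card_univ, ZMod.card, nsmul_eq_mul]
  rw [Real.negMulLog, one_div, Real.log_inv]
  push_cast
  ring

/-- Lifting the table of random bits to a totally defined table. -/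
def Rlift {n d : ℕ} (r : Fin n → Fin d → ZMod 2) (i k : ℕ) : ZMod 2 :=
  if h : i < n ∧ k < d then r ⟨i, h.1⟩ ⟨k, h.2⟩ else 0

lemma Rlift_add {n d : ℕ} (r₁ r₂ : Fin n → Fin d → ZMod 2) (i k : ℕ) :
    Rlift (fun a b => r₁ a b + r₂ a b) i k = Rlift r₁ i k + Rlift r₂ i k := by
  unfold Rlift
  split <;> simp

/-- The first-fit on-line secret sharing scheme for `Γ`. -/
def ffScheme (Γ : AccessStructure P) : OnlineScheme P where
  Ω := ffOmega (Fintype.card P) Γ.maxDegree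
  ms := inferInstance
  μ := μff (Fintype.card P) Γ.maxDegree
  isProb := inferInstance
  Sec := ZMod 2
  secFin := inferInstance
  sec := fun ω => ω.1
  Idx := List (Finset (Finset ℕ))
  ShT := fun _ => Fin Γ.maxDegree → ZMod 2
  shFin := fun _ => inferInstance
  ξ := fun α ω k => shareFun α ω.1 (Rlift ω.2) ↑k
  D := id

/-- The share assignment of the first-fit scheme under arrival order `π`. -/
def ffSh (Γ : AccessStructure P) (π : Fin (Fintype.card P) ≃ P) (p : P)
    (ω : ffOmega (Fintype.card P) Γ.maxDegree) : Fin Γ.maxDegree → ZMod 2 :=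
  fun k => shareFun (histList Γ π (π.symm p)) ω.1 (Rlift ω.2) ↑k

lemma ffRecon (Γ : AccessStructure P) (π : Fin (Fintype.card P) ≃ P) {A : Finset P}
    (hA : Γ.Qualified A) :
    DeterminedBy (μff (Fintype.card P) Γ.maxDegree)
      (fun ω : ffOmega (Fintype.card P) Γ.maxDegree => ω.1)
      (joint (ffSh Γ π) A) := by
  classical
  obtain ⟨E, hE, hEA⟩ := hA
  have hne := Γ.mem_nonempty E hE
  obtain ⟨plast, hplast, hpt⟩ := exists_etime π hne
  have htlt : etime π E < Fintype.card P := by rw [← hpt]; exact (π.symm plast).isLt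
  set J : Fin (Fintype.card P) := ⟨etime π E, htlt⟩ with hJdef
  have hsymm : π.symm plast = J := Fin.ext hpt
  have hJmem : J.1 ∈ posSet π E := etime_mem_posSet π hne
  have hkd : gslot Γ π J.1 E < Γ.maxDegree := gslot_lt Γ π hE hJmem
  refine ⟨fun v =>
    (if h : plast ∈ A ∧ gslot Γ π J.1 E < Γ.maxDegree then
      v ⟨plast, h.1⟩ ⟨gslot Γ π J.1 E, h.2⟩ else 0)
    + ∑ p ∈ E.erase plast,
        (if h : p ∈ A ∧ gslot Γ π (ppos π p) E < Γ.maxDegree then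
          v ⟨p, h.1⟩ ⟨gslot Γ π (ppos π p) E, h.2⟩ else 0),
    Filter.Eventually.of_forall ?_⟩
  intro ω
  simp only
  rw [dif_pos ⟨hEA hplast, hkd⟩]
  have hterm1 : joint (ffSh Γ π) A ω ⟨plast, hEA hplast⟩ ⟨gslot Γ π J.1 E, hkd⟩
      = ω.1 + ∑ i ∈ (posSet π E).erase J.1, Rlift ω.2 i (gslot Γ π i E) := by
    show shareFun (histList Γ π (π.symm plast)) ω.1 (Rlift ω.2) (gslot Γ π J.1 E) = _
    rw [hsymm]
    exact shareFun_correction Γ π J hE rfl ω.1 (Rlift ω.2)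
  have hterm2 : ∀ p ∈ E.erase plast,
      (if h : p ∈ A ∧ gslot Γ π (ppos π p) E < Γ.maxDegree then
        joint (ffSh Γ π) A ω ⟨p, h.1⟩ ⟨gslot Γ π (ppos π p) E, h.2⟩ else 0)
        = Rlift ω.2 (ppos π p) (gslot Γ π (ppos π p) E) := by
    intro p hp
    have hpE := Finset.mem_of_mem_erase hp
    have hpne := Finset.ne_of_mem_erase hp
    have hpi : ppos π p ∈ posSet π E := Finset.mem_image.2 ⟨p, hpE, rfl⟩
    rw [dif_pos ⟨hEA hpE, gslot_lt Γ π hE hpi⟩]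
    show shareFun (histList Γ π (π.symm p)) ω.1 (Rlift ω.2) (gslot Γ π (ppos π p) E) = _
    have hraw := shareFun_raw Γ π (π.symm p) (gslot Γ π (ppos π p) E) ?_ ω.1 (Rlift ω.2)
    · exact hraw
    · intro E₀ hE₀ ht₀ hcontra
      have h1 : ppos π p ∈ posSet π E₀ := by
        unfold ppos
        rw [← ht₀]
        exact etime_mem_posSet π (Γ.mem_nonempty E₀ hE₀)
      have hEE : E₀ = E := gslot_injOn Γ π hE₀ hE h1 hpi hcontra
      rw [hEE] at ht₀
      exact hpne (ppos_injective π (ht₀.symm.trans hpt.symm))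
  rw [Finset.sum_congr rfl hterm2, hterm1]
  have himg : (posSet π E).erase J.1 = (E.erase plast).image (ppos π) := by
    have h1 : posSet π E = E.image (ppos π) := rfl
    have h2 : J.1 = ppos π plast := hpt.symm
    rw [h1, h2, Finset.image_erase (ppos_injective π)]
  rw [himg, Finset.sum_image fun a _ b _ h => ppos_injective π h]
  have hz : ∀ a b : ZMod 2, a = a + b + b := by decide
  exact hz ω.1 _

lemma mem_filter_anyInst {α : Type*} {p : α → Prop} {inst : DecidablePred p}
    {s : Finset α} {x : α} : x ∈ @Finset.filter α p inst s ↔ x ∈ s ∧ p x :=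
  Finset.mem_filter

lemma ffIndep (Γ : AccessStructure P) (π : Fin (Fintype.card P) ≃ P) {A : Finset P}
    (hA : ¬ Γ.Qualified A) :
    IndepRV (μff (Fintype.card P) Γ.maxDegree) (joint (ffSh Γ π) A)
      (fun ω : ffOmega (Fintype.card P) Γ.maxDegree => ω.1) := by
  classical
  obtain ⟨E₁, hE₁⟩ := Γ.nonempty
  obtain ⟨p₁, hp₁⟩ := Γ.mem_nonempty E₁ hE₁
  have hwit : ∀ E : Finset P, ∃ p : P, E ∈ Γ.edges → p ∈ E ∧ p ∉ A := by
    intro E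
    by_cases hE : E ∈ Γ.edges
    · have hne : (E \ A).Nonempty := by
        rw [Finset.sdiff_nonempty]
        exact fun hsub => hA ⟨E, hE, hsub⟩
      obtain ⟨p, hp⟩ := hne
      rw [Finset.mem_sdiff] at hp
      exact ⟨p, fun _ => hp⟩
    · exact ⟨p₁, fun h => absurd h hE⟩
  choose w hw using hwit
  set Dset : Finset (ℕ × ℕ) :=
    Γ.edges.image (fun E => (ppos π (w E), gslot Γ π (ppos π (w E)) E)) with hDdef
  set δ : Fin (Fintype.card P) → Fin Γ.maxDegree → ZMod 2 :=
    fun i k => if ((i : ℕ), (k : ℕ)) ∈ Dset then 1 else 0 with hδdef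
  have hDbound : ∀ i k : ℕ, (i, k) ∈ Dset →
      i < Fintype.card P ∧ k < Γ.maxDegree := by
    intro i k hik
    rcases Finset.mem_image.1 hik with ⟨E, hE, heq⟩
    injection heq with h1 h2
    subst h1; subst h2
    refine ⟨(π.symm (w E)).isLt, ?_⟩
    exact gslot_lt Γ π hE (Finset.mem_image.2 ⟨w E, (hw E hE).1, rfl⟩)
  have hRδ : ∀ (r : Fin (Fintype.card P) → Fin Γ.maxDegree → ZMod 2) (i k : ℕ),
      Rlift (fun a b => r a b + δ a b) i k
        = Rlift r i k + (if (i, k) ∈ Dset then 1 else 0) := by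
    intro r i k
    rw [Rlift_add]
    congr 1
    unfold Rlift
    split
    · rfl
    · next h =>
      by_cases hm : (i, k) ∈ Dset
      · exact absurd (hDbound i k hm) h
      · rw [if_neg hm]
  have hkey : ∀ (s : ZMod 2) (r : Fin (Fintype.card P) → Fin Γ.maxDegree → ZMod 2)
      (q : P), q ∈ A → ∀ k : Fin Γ.maxDegree,
      shareFun (histList Γ π (π.symm q)) (s+1)
          (Rlift (fun a b => r a b + δ a b)) ↑k
        = shareFun (histList Γ π (π.symm q)) s (Rlift r) ↑k := by
    intro s r q hq k
    by_cases hc : ∃ E ∈ Γ.edges, etime π E = ((π.symm q : Fin (Fintype.card P)) : ℕ)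
        ∧ gslot Γ π ((π.symm q : Fin (Fintype.card P)) : ℕ) E = (k : ℕ)
    · obtain ⟨E, hE, hEt, hEk⟩ := hc
      rw [← hEk, shareFun_correction Γ π (π.symm q) hE hEt,
        shareFun_correction Γ π (π.symm q) hE hEt]
      have hsum : ∑ i ∈ (posSet π E).erase (π.symm q).1,
            Rlift (fun a b => r a b + δ a b) i (gslot Γ π i E)
          = (∑ i ∈ (posSet π E).erase (π.symm q).1,
              Rlift r i (gslot Γ π i E)) + 1 := by
        rw [Finset.sum_congr rfl fun i _ => hRδ r i _, Finset.sum_add_distrib]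
        congr 1
        rw [Finset.sum_eq_single_of_mem (ppos π (w E)) ?memb ?other]
        · rw [if_pos (Finset.mem_image.2 ⟨E, hE, rfl⟩)]
        case memb =>
          apply Finset.mem_erase.2
          refine ⟨?_, Finset.mem_image.2 ⟨w E, (hw E hE).1, rfl⟩⟩
          intro hcontra
          exact (hw E hE).2 (by rw [ppos_injective π hcontra]; exact hq)
        case other =>
          intro i hi hne
          rw [if_neg]
          intro hmem
          rcases Finset.mem_image.1 hmem with ⟨E'', hE'', heq⟩
          injection heq with h1 h2
          rw [h1] at h2
          have hiE : i ∈ posSet π E := (Finset.mem_erase.1 hi).2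
          have hiE'' : i ∈ posSet π E'' :=
            Finset.mem_image.2 ⟨w E'', (hw E'' hE'').1, h1⟩
          have hEEq : E'' = E := gslot_injOn Γ π hE'' hE hiE'' hiE h2
          exact hne (by rw [← h1, hEEq])
      rw [hsum]
      have hz : ∀ a b : ZMod 2, (a + 1) + (b + 1) = a + b := by decide
      exact hz s _
    · push_neg at hc
      rw [shareFun_raw Γ π (π.symm q) ↑k (fun E hE hEt => hc E hE hEt) (s+1) _,
        shareFun_raw Γ π (π.symm q) ↑k (fun E hE hEt => hc E hE hEt) s _,
        hRδ, if_neg, add_zero]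
      intro hmem
      rcases Finset.mem_image.1 hmem with ⟨E'', hE'', heq⟩
      injection heq with h1 h2
      exact (hw E'' hE'').2 (by rw [ppos_injective π h1]; exact hq)
  -- the pair-level bijection
  set Φ : (Fin (Fintype.card P) → Fin Γ.maxDegree → ZMod 2)
      → (Fin (Fintype.card P) → Fin Γ.maxDegree → ZMod 2) :=
    fun r => fun a b => r a b + δ a b with hΦdef
  have hΦΦ : ∀ r, Φ (Φ r) = r := by
    intro r
    funext a b
    show r a b + δ a b + δ a b = r a b
    have : ∀ x y : ZMod 2, x + y + y = x := by decide
    exact this _ _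
  set X := joint (ffSh Γ π) A with hXdef
  have hpair : ∀ (s : ZMod 2) (r), X ((s + 1, Φ r) : ffOmega (Fintype.card P) Γ.maxDegree)
      = X ((s, r) : ffOmega (Fintype.card P) Γ.maxDegree) := by
    intro s r
    funext q
    funext k
    exact hkey s r q.1 q.2 k
  intro a t
  set Na : ZMod 2 → ℕ := fun s => (Finset.univ.filter
    fun r : Fin (Fintype.card P) → Fin Γ.maxDegree → ZMod 2 =>
      X ((s, r) : ffOmega (Fintype.card P) Γ.maxDegree) = a).card with hNadef
  have hstep : ∀ s : ZMod 2, Na s = Na (s + 1) := by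
    intro s
    apply Finset.card_bij' (fun r _ => Φ r) (fun r _ => Φ r)
    · intro r hr
      refine Finset.mem_filter.2 ⟨Finset.mem_univ _, ?_⟩
      rw [hpair s r]
      exact (Finset.mem_filter.1 hr).2
    · intro r hr
      refine Finset.mem_filter.2 ⟨Finset.mem_univ _, ?_⟩
      have h2 := hpair s (Φ r)
      rw [hΦΦ r] at h2
      rw [← h2]
      exact (Finset.mem_filter.1 hr).2
    · intro r _; exact hΦΦ r
    · intro r _; exact hΦΦ r
  have hNaconst : ∀ u v : ZMod 2, Na u = Na v := by
    have h01 : Na 0 = Na 1 := by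
      have := hstep 0
      rwa [show ((0 : ZMod 2) + 1) = 1 by decide] at this
    intro u v
    have hcase : ∀ z : ZMod 2, z = 0 ∨ z = 1 := by decide
    rcases hcase u with hu | hu <;> rcases hcase v with hv | hv <;>
      simp [hu, hv, h01]
  -- counting
  have hcard1 : ∀ t' : ZMod 2, (Finset.univ.filter
      fun ω : ffOmega (Fintype.card P) Γ.maxDegree => X ω = a ∧ ω.1 = t').card
        = Na t' := by
    intro t'
    apply Finset.card_bij' (fun ω _ => ω.2)
      (fun r _ => ((t', r) : ffOmega (Fintype.card P) Γ.maxDegree))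
    · intro ω hω
      obtain ⟨_, h1, h2⟩ := mem_filter_anyInst.1 hω
      refine Finset.mem_filter.2 ⟨Finset.mem_univ _, ?_⟩
      rw [← h2]
      exact h1
    · intro r hr
      exact mem_filter_anyInst.2 ⟨Finset.mem_univ _, (Finset.mem_filter.1 hr).2, rfl⟩
    · intro ω hω
      exact Prod.ext ((mem_filter_anyInst.1 hω).2.2).symm rfl
    · intro r _; rfl
  have hcard2 : (Finset.univ.filter
      fun ω : ffOmega (Fintype.card P) Γ.maxDegree => X ω = a).card = 2 * Na t := by
    rw [Finset.card_eq_sum_card_fiberwise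
      (f := fun ω : ffOmega (Fintype.card P) Γ.maxDegree => ω.1) (t := Finset.univ)
      (fun x _ => Finset.mem_univ _)]
    rw [show (Finset.univ : Finset (ZMod 2)) = {0, 1} by decide]
    rw [Finset.sum_insert (by decide), Finset.sum_singleton, Finset.filter_filter,
      Finset.filter_filter, hcard1 0, hcard1 1, hNaconst 0 t, hNaconst 1 t]
    ring
  -- measures
  have e1 : X ⁻¹' {a} ∩ (fun ω : ffOmega (Fintype.card P) Γ.maxDegree => ω.1) ⁻¹' {t}
      = ↑(Finset.univ.filter
        fun ω : ffOmega (Fintype.card P) Γ.maxDegree => X ω = a ∧ ω.1 = t) := by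
    ext ω; simp
  have e2 : X ⁻¹' {a} = ↑(Finset.univ.filter
      fun ω : ffOmega (Fintype.card P) Γ.maxDegree => X ω = a) := by
    ext ω; simp
  have e3 : (fun ω : ffOmega (Fintype.card P) Γ.maxDegree => ω.1) ⁻¹' {t}
      = ↑(Finset.univ.filter
        fun ω : ffOmega (Fintype.card P) Γ.maxDegree => ω.1 = t) := by
    ext ω; simp
  rw [e1, e2, e3, μff_coe, μff_coe, μff_coe, hcard1 t, hcard2, card_fiber_fst]
  rw [ffcard_eq]
  set R := (Fintype.card (Fin (Fintype.card P) → Fin Γ.maxDegree → ZMod 2) : ℝ≥0∞)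
    with hRdef
  have hR0 : R ≠ 0 := by rw [hRdef]; exact_mod_cast Fintype.card_ne_zero
  have hRtop : R ≠ ⊤ := by rw [hRdef]; exact ENNReal.natCast_ne_top _
  have hc0 : (2 : ℝ≥0∞) * R ≠ 0 := by
    exact mul_ne_zero (by norm_num) hR0
  have hctop : (2 : ℝ≥0∞) * R ≠ ⊤ := by
    exact ENNReal.mul_ne_top (by norm_num) hRtop
  have hcast : ((2 * Fintype.card (Fin (Fintype.card P) → Fin Γ.maxDegree → ZMod 2) : ℕ)
      : ℝ≥0∞) = 2 * R := by push_cast [hRdef]; ring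
  rw [hcast]
  have hcast2 : ((2 * Na t : ℕ) : ℝ≥0∞) = 2 * (Na t : ℝ≥0∞) := by push_cast; ring
  rw [hcast2]
  calc (2 * R)⁻¹ * (Na t : ℝ≥0∞)
      = (2 * R)⁻¹ * (Na t : ℝ≥0∞) * 1 := by rw [mul_one]
    _ = (2 * R)⁻¹ * (Na t : ℝ≥0∞) * ((2 * R)⁻¹ * (2 * R)) := by
        rw [ENNReal.inv_mul_cancel hc0 hctop]
    _ = (2 * R)⁻¹ * (2 * (Na t : ℝ≥0∞)) * ((2 * R)⁻¹ * R) := by ring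

lemma ffScheme_realizes (Γ : AccessStructure P) : (ffScheme Γ).Realizes Γ := by
  intro π
  refine ⟨?_, ?_, ?_⟩
  · show 0 < H (μff (Fintype.card P) Γ.maxDegree)
      (fun ω : ffOmega (Fintype.card P) Γ.maxDegree => ω.1)
    rw [H_fst]
    exact Real.log_pos (by norm_num)
  · intro A hA
    exact ffRecon Γ π hA
  · intro A hA
    exact ffIndep Γ π hA

lemma ffScheme_complexity (Γ : AccessStructure P) :
    (ffScheme Γ).complexity ≤ (Γ.maxDegree : ℝ≥0∞) := by
  show (⨆ α : List (Finset (Finset ℕ)),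
      ENNReal.ofReal (H (μff (Fintype.card P) Γ.maxDegree)
        (fun ω : ffOmega (Fintype.card P) Γ.maxDegree =>
          (fun k : Fin Γ.maxDegree => shareFun α ω.1 (Rlift ω.2) ↑k))))
    / ENNReal.ofReal (H (μff (Fintype.card P) Γ.maxDegree)
        (fun ω : ffOmega (Fintype.card P) Γ.maxDegree => ω.1))
    ≤ (Γ.maxDegree : ℝ≥0∞)
  have hlog2 : (0:ℝ) < Real.log 2 := Real.log_pos (by norm_num)
  rw [H_fst]
  rw [ENNReal.div_le_iff_le_mul (Or.inl (ENNReal.ofReal_pos.2 hlog2).ne')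
    (Or.inl ENNReal.ofReal_ne_top)]
  apply iSup_le
  intro α
  have hle : H (μff (Fintype.card P) Γ.maxDegree)
      (fun ω : ffOmega (Fintype.card P) Γ.maxDegree =>
        (fun k : Fin Γ.maxDegree => shareFun α ω.1 (Rlift ω.2) ↑k))
      ≤ (Γ.maxDegree : ℝ) * Real.log 2 := by
    have h := H_μff_le (S := Fin Γ.maxDegree → ZMod 2)
      (fun ω : ffOmega (Fintype.card P) Γ.maxDegree =>
        (fun k : Fin Γ.maxDegree => shareFun α ω.1 (Rlift ω.2) ↑k))
    have hcard : Fintype.card (Fin Γ.maxDegree → ZMod 2) = 2 ^ Γ.maxDegree := by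
      rw [Fintype.card_fun, ZMod.card, Fintype.card_fin]
    rw [hcard] at h
    calc H (μff (Fintype.card P) Γ.maxDegree) _
        ≤ Real.log (((2 ^ Γ.maxDegree : ℕ) : ℝ)) := h
      _ = (Γ.maxDegree : ℝ) * Real.log 2 := by
          rw [Nat.cast_pow, Real.log_pow]
          norm_num
  calc ENNReal.ofReal (H (μff (Fintype.card P) Γ.maxDegree) _)
      ≤ ENNReal.ofReal ((Γ.maxDegree : ℝ) * Real.log 2) := ENNReal.ofReal_le_ofReal hle
    _ = (Γ.maxDegree : ℝ≥0∞) * ENNReal.ofReal (Real.log 2) := by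
        rw [ENNReal.ofReal_mul (by positivity), ENNReal.ofReal_natCast]

end FirstFitAux


/-- Theorem 1.1, the first-fit scheme. Every access structure
`Γ` is realized by an on-line secret sharing scheme of complexity at most the
maximal degree `d(Γ)`; in particular `o(Γ) ≤ d(Γ)`. -/
theorem statement9 {P : Type} [Fintype P] [DecidableEq P] (Γ : AccessStructure P) :
    (∃ 𝒪 : OnlineScheme P, 𝒪.Realizes Γ ∧
        𝒪.complexity ≤ (Γ.maxDegree : ℝ≥0∞)) ∧
      oC Γ ≤ (Γ.maxDegree : ℝ≥0∞) := by
  have hreal := ffScheme_realizes Γ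
  have hcomp := ffScheme_complexity Γ
  refine ⟨⟨ffScheme Γ, hreal, hcomp⟩, ?_⟩
  calc oC Γ ≤ (ffScheme Γ).complexity := by
        apply iInf_le_of_le (ffScheme Γ)
        exact iInf_le_of_le hreal le_rfl
    _ ≤ (Γ.maxDegree : ℝ≥0∞) := hcomp

end

end OnlineSecretSharing
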